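/- Let α ∈ (3/2,2) and define P_V ψ = ψ − Γ(α)(ₓI₁^{α−1} ψ)(0) for ψ ∈ L²(0,1). Then P_V is a bounded linear operator on L²(0,1), and for any absolutely continuous ψ with ψ(0) = ψ(1) = 0 and ψ′ ∈ L²(0,1), setting φ = ᴿD₁^{α−1} ψ = −ₓI₁^{2−α}(ψ)′ one has P_V φ = φ. -/

import Mathlib

open MeasureTheory Set

/-- Right-sided Riemann-Liouville fractional integral of order `γ`. -/
noncomputable def rightFracInt (γ : ℝ) (f : ℝ → ℝ) (x : ℝ) : ℝ :=
  (1 / Real.Gamma γ) * ∫ t in x..(1:ℝ), (t - x) ^ (γ - 1) * f t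

/-- The operator `P_V ψ = ψ - Γ(α)(ₓI₁^{α-1} ψ)(0)`. -/
noncomputable def PV (α : ℝ) (ψ : ℝ → ℝ) (x : ℝ) : ℝ :=
  ψ x - Real.Gamma α * rightFracInt (α - 1) ψ 0

section Aux
open intervalIntegral Filter Metric
open scoped ENNReal NNReal Topology


lemma meas_rpow (c : ℝ) : Measurable (fun t : ℝ => t ^ c) := by measurability

lemma meas_twoKernel (a b s : ℝ) : Measurable (fun t : ℝ => t ^ a * (s - t) ^ b) :=
  (meas_rpow a).mul ((meas_rpow b).comp (measurable_const.sub measurable_id))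

lemma II_sub_right {r : ℝ} (hr : -1 < r) (x a b : ℝ) :
    IntervalIntegrable (fun t => (t - x) ^ r) volume a b := by
  have := (intervalIntegral.intervalIntegrable_rpow' hr (a := a - x) (b := b - x)).comp_sub_right x
  simpa using this

lemma II_sub_left {r : ℝ} (hr : -1 < r) (s a b : ℝ) :
    IntervalIntegrable (fun t => (s - t) ^ r) volume a b := by
  have := (intervalIntegral.intervalIntegrable_rpow' hr (a := s - a) (b := s - b)).comp_sub_left s
  simpa using this

lemma IOn_sub_right {r : ℝ} (hr : -1 < r) {x s : ℝ} (hxs : x ≤ s) :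
    IntegrableOn (fun t => (t - x) ^ r) (Ioo x s) volume :=
  ((intervalIntegrable_iff_integrableOn_Ioc_of_le hxs).mp (II_sub_right hr x x s)).mono_set
    Ioo_subset_Ioc_self

lemma IOn_sub_left {r : ℝ} (hr : -1 < r) {x s : ℝ} (hxs : x ≤ s) :
    IntegrableOn (fun t => (s - t) ^ r) (Ioo x s) volume :=
  ((intervalIntegrable_iff_integrableOn_Ioc_of_le hxs).mp (II_sub_left hr s x s)).mono_set
    Ioo_subset_Ioc_self

lemma int_Ioo_sub_right {r : ℝ} (hr : -1 < r) {x s : ℝ} (hxs : x ≤ s) :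
    ∫ t in Ioo x s, (t - x) ^ r = (s - x) ^ (r+1) / (r+1) := by
  rw [← integral_Ioc_eq_integral_Ioo, ← intervalIntegral.integral_of_le hxs,
    intervalIntegral.integral_comp_sub_right (fun u => u ^ r) x, sub_self,
    integral_rpow (Or.inl hr), Real.zero_rpow (by linarith : r + 1 ≠ 0)]
  ring

lemma int_Ioo_sub_left {r : ℝ} (hr : -1 < r) {x s : ℝ} (hxs : x ≤ s) :
    ∫ t in Ioo x s, (s - t) ^ r = (s - x) ^ (r+1) / (r+1) := by
  rw [← integral_Ioc_eq_integral_Ioo, ← intervalIntegral.integral_of_le hxs,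
    intervalIntegral.integral_comp_sub_left (fun u => u ^ r) s, sub_self,
    integral_rpow (Or.inl hr), Real.zero_rpow (by linarith : r + 1 ≠ 0)]
  ring

lemma twoKernel_int {a b : ℝ} (ha : -1 < a) (hb : -1 < b) {s : ℝ} (hs : 0 < s) :
    IntegrableOn (fun t : ℝ => t ^ a * (s - t) ^ b) (Ioo 0 s) volume := by
  have hmeas : AEStronglyMeasurable (fun t : ℝ => t ^ a * (s - t) ^ b) (volume.restrict (Ioc 0 (s/2))) := by
    exact (meas_twoKernel a b s).aestronglyMeasurable
  have hmeas2 : AEStronglyMeasurable (fun t : ℝ => t ^ a * (s - t) ^ b) (volume.restrict (Ioc (s/2) s)) := by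
    exact (meas_twoKernel a b s).aestronglyMeasurable
  have h1 : IntegrableOn (fun t : ℝ => t ^ a * (s - t) ^ b) (Ioc 0 (s/2)) volume := by
    set M1 := max ((s/2) ^ b) (s ^ b) with hM1
    refine Integrable.mono' (g := fun t => M1 * t ^ a) ?_ hmeas ?_
    · refine Integrable.const_mul ?_ M1
      exact (intervalIntegrable_iff_integrableOn_Ioc_of_le (by linarith)).mp
        (intervalIntegral.intervalIntegrable_rpow' ha)
    · filter_upwards [ae_restrict_mem measurableSet_Ioc] with t ht
      have ht0 : 0 < t := ht.1
      have hst : s/2 ≤ s - t := by linarith [ht.2]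
      have hst' : s - t ≤ s := by linarith
      have hb1 : (s - t) ^ b ≤ M1 := by
        rcases le_or_gt b 0 with hb0 | hb0
        · exact le_trans (Real.rpow_le_rpow_of_nonpos (by linarith) hst hb0) (le_max_left _ _)
        · exact le_trans (Real.rpow_le_rpow (by linarith) hst' hb0.le) (le_max_right _ _)
      have h0 : 0 ≤ t ^ a := Real.rpow_nonneg ht0.le a
      rw [Real.norm_eq_abs, abs_mul, abs_of_nonneg h0,
        abs_of_nonneg (Real.rpow_nonneg (by linarith) b)]
      calc t ^ a * (s - t) ^ b ≤ t ^ a * M1 := by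
            exact mul_le_mul_of_nonneg_left hb1 h0
        _ = M1 * t ^ a := mul_comm _ _
  have h2 : IntegrableOn (fun t : ℝ => t ^ a * (s - t) ^ b) (Ioc (s/2) s) volume := by
    set M2 := max ((s/2) ^ a) (s ^ a) with hM2
    refine Integrable.mono' (g := fun t => M2 * (s - t) ^ b) ?_ hmeas2 ?_
    · refine Integrable.const_mul ?_ M2
      exact (intervalIntegrable_iff_integrableOn_Ioc_of_le (by linarith)).mp
        (II_sub_left hb s (s/2) s)
    · filter_upwards [ae_restrict_mem measurableSet_Ioc] with t ht
      have ht0 : s/2 < t := ht.1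
      have ha1 : t ^ a ≤ M2 := by
        rcases le_or_gt a 0 with ha0 | ha0
        · exact le_trans (Real.rpow_le_rpow_of_nonpos (by linarith) ht0.le ha0) (le_max_left _ _)
        · exact le_trans (Real.rpow_le_rpow (by linarith) ht.2 ha0.le) (le_max_right _ _)
      have h0 : 0 ≤ (s - t) ^ b := Real.rpow_nonneg (by linarith [ht.2]) b
      rw [Real.norm_eq_abs, abs_mul, abs_of_nonneg (Real.rpow_nonneg (by linarith [ht.1]) a),
        abs_of_nonneg h0]
      exact mul_le_mul_of_nonneg_right ha1 h0
  refine (h1.union h2).mono_set ?_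
  intro u hu
  rcases le_or_gt u (s/2) with h | h
  · exact Or.inl ⟨hu.1, h⟩
  · exact Or.inr ⟨h, hu.2.le⟩

lemma twoKernel_val (a b : ℝ) {s : ℝ} (hs : 0 < s) :
    ∫ t in Ioo 0 s, t ^ a * (s - t) ^ b
      = s ^ (a+b+1) * ∫ u in Ioo 0 1, u ^ a * (1-u) ^ b := by
  have key := intervalIntegral.smul_integral_comp_mul_left
    (fun t : ℝ => t ^ a * (s - t) ^ b) s (a := 0) (b := 1)
  simp only [mul_zero, mul_one] at key
  rw [← integral_Ioc_eq_integral_Ioo, ← intervalIntegral.integral_of_le hs.le, ← key]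
  have hcong : ∀ u ∈ uIcc (0:ℝ) 1,
      (s * u) ^ a * (s - s * u) ^ b = s ^ (a+b) * (u ^ a * (1-u) ^ b) := by
    intro u hu
    rw [uIcc_of_le zero_le_one] at hu
    have hu0 : 0 ≤ u := hu.1
    have hu1 : 0 ≤ 1 - u := by linarith [hu.2]
    rw [Real.mul_rpow hs.le hu0, show s - s * u = s * (1 - u) by ring,
      Real.mul_rpow hs.le hu1, Real.rpow_add hs]
    ring
  rw [intervalIntegral.integral_congr hcong, intervalIntegral.integral_const_mul,
    ← integral_Ioc_eq_integral_Ioo (x := (0:ℝ)) (y := 1),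
    ← intervalIntegral.integral_of_le zero_le_one, smul_eq_mul,
    Real.rpow_add hs, Real.rpow_add hs, Real.rpow_one, Real.rpow_add hs]
  ring


lemma swap_triangle {x : ℝ} (hx0 : 0 ≤ x) (w : ℝ → ℝ → ℝ) (g : ℝ → ℝ)
    (hw : Measurable (Function.uncurry w)) (_hgm : Measurable g)
    (hg : IntegrableOn g (Ioo x 1) volume)
    (hwnn : ∀ t s : ℝ, x < t → t < s → 0 ≤ w t s)
    (hwint : ∀ s ∈ Ioo x 1, IntegrableOn (fun t => w t s) (Ioo x s) volume)
    (M : ℝ) (hM : ∀ s ∈ Ioo x 1, (∫ t in Ioo x s, w t s) ≤ M) :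
    IntegrableOn (fun t => ∫ s in Ioo t 1, w t s * g s) (Ioo x 1) volume ∧
    (∫ t in Ioo x 1, ∫ s in Ioo t 1, w t s * g s)
      = ∫ s in Ioo x 1, (∫ t in Ioo x s, w t s) * g s := by
  set μ := volume.restrict (Ioo x 1) with hμdef
  have hSm : MeasurableSet {p : ℝ × ℝ | p.1 < p.2} :=
    measurableSet_lt measurable_fst measurable_snd
  set f : ℝ × ℝ → ℝ :=
    ({p : ℝ × ℝ | p.1 < p.2}).indicator (fun p => w p.1 p.2 * g p.2) with hfdef
  have hfm : StronglyMeasurable f :=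
    ((hw.mul (_hgm.comp measurable_snd)).indicator hSm).stronglyMeasurable
  have sec1 : ∀ t : ℝ, (fun s => f (t, s)) = (Ioi t).indicator (fun s => w t s * g s) := by
    intro t; funext s
    by_cases h : t < s <;> simp [hfdef, Set.indicator, h, Set.mem_Ioi]
  have sec2 : ∀ s : ℝ, (fun t => f (t, s)) = (Iio s).indicator (fun t => w t s * g s) := by
    intro s; funext t
    by_cases h : t < s <;> simp [hfdef, Set.indicator, h, Set.mem_Iio]
  have hset2 : ∀ s : ℝ, s ≤ 1 → Iio s ∩ Ioo x 1 = Ioo x s := by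
    intro s hs; ext t
    simp only [Set.mem_inter_iff, Set.mem_Iio, Set.mem_Ioo]
    constructor
    · rintro ⟨h1, h2, _⟩; exact ⟨h2, h1⟩
    · rintro ⟨h1, h2⟩; exact ⟨h2, h1, lt_of_lt_of_le h2 hs⟩
  have hset1 : ∀ t : ℝ, x ≤ t → Ioi t ∩ Ioo x 1 = Ioo t 1 := by
    intro t ht; ext s
    simp only [Set.mem_inter_iff, Set.mem_Ioi, Set.mem_Ioo]
    constructor
    · rintro ⟨h1, _, h3⟩; exact ⟨h1, h3⟩
    · rintro ⟨h1, h2⟩; exact ⟨h1, lt_of_le_of_lt ht h1, h2⟩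
  -- sections in t
  have hsecInt : ∀ s ∈ Ioo x 1, Integrable (fun t => f (t, s)) μ := by
    intro s hs
    rw [sec2 s, hμdef]
    rw [integrable_indicator_iff measurableSet_Iio]
    have : (volume.restrict (Ioo x 1)).restrict (Iio s) = volume.restrict (Ioo x s) := by
      rw [Measure.restrict_restrict measurableSet_Iio, hset2 s hs.2.le]
    unfold IntegrableOn
    rw [this]
    exact (hwint s hs).mul_const (g s)
  have hsecVal : ∀ s ∈ Ioo x 1,
      (∫ t, ‖f (t, s)‖ ∂μ) = (∫ t in Ioo x s, w t s) * |g s| := by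
    intro s hs
    have : (fun t => ‖f (t, s)‖) = (Iio s).indicator (fun t => ‖w t s * g s‖) := by
      funext t
      rw [show f (t, s) = (Iio s).indicator (fun t => w t s * g s) t from congrFun (sec2 s) t]
      exact norm_indicator_eq_indicator_norm _ _
    rw [this, hμdef, MeasureTheory.integral_indicator measurableSet_Iio]
    rw [Measure.restrict_restrict measurableSet_Iio, hset2 s hs.2.le]
    rw [show (∫ t in Ioo x s, ‖w t s * g s‖) = ∫ t in Ioo x s, w t s * |g s| from ?_,
      MeasureTheory.integral_mul_const]
    apply setIntegral_congr_fun measurableSet_Ioo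
    intro t ht
    show ‖w t s * g s‖ = w t s * |g s|
    rw [Real.norm_eq_abs, abs_mul, abs_of_nonneg (hwnn t s ht.1 ht.2)]
  have hint : Integrable f (μ.prod μ) := by
    rw [integrable_prod_iff' hfm.aestronglyMeasurable]
    constructor
    · filter_upwards [ae_restrict_mem measurableSet_Ioo] with s hs
      exact hsecInt s hs
    · refine Integrable.mono' (g := fun s => M * |g s|) ((hg.abs).const_mul M)
        ((hfm.norm.integral_prod_left' (μ := μ)).aestronglyMeasurable) ?_
      filter_upwards [ae_restrict_mem measurableSet_Ioo] with s hs
      rw [Real.norm_eq_abs, abs_of_nonneg (integral_nonneg (fun t => norm_nonneg _)),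
        hsecVal s hs]
      have h1 : (∫ t in Ioo x s, w t s) ≤ M := hM s hs
      exact mul_le_mul_of_nonneg_right h1 (abs_nonneg _)
  have swap := integral_integral_swap (f := fun t s => f (t, s)) (μ := μ) (ν := μ) hint
  have inner_eq : ∀ t ∈ Ioo x 1, (∫ s, f (t, s) ∂μ) = ∫ s in Ioo t 1, w t s * g s := by
    intro t ht
    show (∫ s, f (t, s) ∂μ) = ∫ s in Ioo t 1, w t s * g s
    rw [hμdef, sec1 t, MeasureTheory.integral_indicator measurableSet_Ioi,
      Measure.restrict_restrict measurableSet_Ioi, hset1 t ht.1.le]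
  have lhs_eq : (∫ t, ∫ s, f (t, s) ∂μ ∂μ) = ∫ t in Ioo x 1, ∫ s in Ioo t 1, w t s * g s := by
    rw [hμdef]
    apply setIntegral_congr_fun measurableSet_Ioo
    intro t ht
    exact inner_eq t ht
  have rhs_eq : (∫ s, ∫ t, f (t, s) ∂μ ∂μ) = ∫ s in Ioo x 1, (∫ t in Ioo x s, w t s) * g s := by
    rw [hμdef]
    apply setIntegral_congr_fun measurableSet_Ioo
    intro s hs
    show (∫ t in Ioo x 1, f (t, s)) = (∫ t in Ioo x s, w t s) * g s
    rw [sec2 s, MeasureTheory.integral_indicator measurableSet_Iio,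
      Measure.restrict_restrict measurableSet_Iio, hset2 s hs.2.le, MeasureTheory.integral_mul_const]
  constructor
  · apply (hint.integral_prod_left).congr
    filter_upwards [ae_restrict_mem measurableSet_Ioo] with t ht
    exact inner_eq t ht
  · rw [← lhs_eq, ← rhs_eq, swap]


lemma ae_hasDerivAt_int (K : ℝ → ℝ) (hK : Integrable K volume) :
    ∀ᵐ x : ℝ, HasDerivAt (fun y => ∫ t in y..(1:ℝ), K t) (-K x) x := by
  filter_upwards [IsUnifLocDoublingMeasure.ae_tendsto_average_norm_sub (μ := volume)
    hK.locallyIntegrable 1] with x hx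
  rw [hasDerivAt_iff_tendsto]
  set q : ℝ → ℝ := fun y =>
    ‖y - x‖⁻¹ * ‖(∫ t in y..(1:ℝ), K t) - (∫ t in x..(1:ℝ), K t) - (y - x) • (-K x)‖ with hq
  show Tendsto q (𝓝 x) (𝓝 0)
  have hqx : q x = 0 := by simp [hq]
  have havg : Tendsto (fun y : ℝ => ⨍ z in closedBall x |y - x|, ‖K z - K x‖) (𝓝[≠] x) (𝓝 0) := by
    apply hx (fun _ : ℝ => x) (fun y : ℝ => |y - x|)
    · rw [tendsto_nhdsWithin_iff]
      constructor
      · have : Tendsto (fun y : ℝ => |y - x|) (𝓝 x) (𝓝 |x - x|) := by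
          apply Continuous.tendsto; continuity
        simp only [sub_self, abs_zero] at this
        exact this.mono_left nhdsWithin_le_nhds
      · filter_upwards [self_mem_nhdsWithin] with y hy
        exact mem_Ioi.mpr (abs_pos.mpr (sub_ne_zero.mpr hy))
    · filter_upwards with y
      apply mem_closedBall_self
      positivity
  have hq_le : ∀ᶠ y in 𝓝[≠] x, q y ≤ 2 * ⨍ z in closedBall x |y - x|, ‖K z - K x‖ := by
    filter_upwards [self_mem_nhdsWithin] with y hy
    have habs : (0:ℝ) < |y - x| := abs_pos.mpr (sub_ne_zero.mpr hy)
    have hII : ∀ a b : ℝ, IntervalIntegrable K volume a b := fun a b => hK.intervalIntegrable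
    have hsub : (∫ t in y..(1:ℝ), K t) - (∫ t in x..(1:ℝ), K t) = -∫ t in x..y, K t := by
      rw [← intervalIntegral.integral_add_adjacent_intervals (hII x y) (hII y 1)]
      ring
    have hconst : (∫ t in x..y, (K x : ℝ)) = (y - x) • K x := by
      simp [intervalIntegral.integral_const]
    have hdiff : (∫ t in y..(1:ℝ), K t) - (∫ t in x..(1:ℝ), K t) - (y - x) • (-K x)
        = -∫ t in x..y, (K t - K x) := by
      rw [intervalIntegral.integral_sub (hII x y) (intervalIntegrable_const), hsub, hconst]
      simp; ring
    have hIball : IntegrableOn (fun z => ‖K z - K x‖) (closedBall x |y - x|) volume := by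
      exact (hK.integrableOn.sub (integrableOn_const measure_closedBall_lt_top.ne)).norm
    have hbound : ‖∫ t in x..y, (K t - K x)‖ ≤ ∫ z in closedBall x |y - x|, ‖K z - K x‖ := by
      refine le_trans (intervalIntegral.norm_integral_le_integral_norm_uIoc) ?_
      apply setIntegral_mono_set hIball
      · filter_upwards with z using norm_nonneg _
      · apply HasSubset.Subset.eventuallyLE
        intro z hz
        rw [mem_closedBall, Real.dist_eq]
        rcases le_total x y with h | h
        · rw [uIoc_of_le h] at hz
          rw [abs_of_nonneg (by linarith [hz.1] : (0:ℝ) ≤ z - x), abs_of_nonneg (by linarith)]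
          linarith [hz.2]
        · rw [uIoc_of_ge h] at hz
          rw [abs_of_nonpos (by linarith [hz.2] : z - x ≤ 0), abs_of_nonpos (by linarith)]
          linarith [hz.1]
    have havg_eq : (∫ z in closedBall x |y - x|, ‖K z - K x‖)
        = (2 * |y - x|) * ⨍ z in closedBall x |y - x|, ‖K z - K x‖ := by
      rw [setAverage_eq, Real.volume_real_closedBall (by positivity), smul_eq_mul]
      field_simp
    calc q y = |y - x|⁻¹ * ‖∫ t in x..y, (K t - K x)‖ := by
          rw [hq]; simp only; rw [hdiff, norm_neg, Real.norm_eq_abs]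
      _ ≤ |y - x|⁻¹ * ((2 * |y - x|) * ⨍ z in closedBall x |y - x|, ‖K z - K x‖) := by
          rw [← havg_eq]
          exact mul_le_mul_of_nonneg_left hbound (by positivity)
      _ = 2 * ⨍ z in closedBall x |y - x|, ‖K z - K x‖ := by
          field_simp
  have h1 : Tendsto q (𝓝[≠] x) (𝓝 0) := by
    refine squeeze_zero' ?_ hq_le ?_
    · filter_upwards with y
      exact mul_nonneg (by positivity) (norm_nonneg _)
    · simpa using havg.const_mul (2:ℝ)
  have h2 : Tendsto q (pure x) (𝓝 0) := by
    rw [← hqx]; exact tendsto_pure_nhds q x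
  rw [← nhdsNE_sup_pure x]
  exact Tendsto.sup h1 h2

lemma part1 {α : ℝ} (hα : α ∈ Set.Ioo (3/2 : ℝ) 2) :
    ∃ c : ℝ, 0 < c ∧ ∀ ψ : ℝ → ℝ,
      MemLp ψ 2 (volume.restrict (Set.Ioo (0:ℝ) 1)) →
      eLpNorm (PV α ψ) 2 (volume.restrict (Set.Ioo (0:ℝ) 1))
        ≤ ENNReal.ofReal c * eLpNorm ψ 2 (volume.restrict (Set.Ioo (0:ℝ) 1)) := by
  obtain ⟨hα1, hα2⟩ := hα
  set μ := volume.restrict (Set.Ioo (0:ℝ) 1) with hμ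
  have hμuniv : μ Set.univ = 1 := by
    simp [hμ, Real.volume_Ioo]
  have hμne : μ ≠ 0 := by
    intro h; rw [h] at hμuniv; simp at hμuniv
  have hΓα : 0 < Real.Gamma α := Real.Gamma_pos_of_pos (by linarith)
  have hΓα1 : 0 < Real.Gamma (α - 1) := Real.Gamma_pos_of_pos (by linarith)
  set w : ℝ → ℝ := fun t => t ^ (α - 2) with hw
  have hw_meas : Measurable w := by measurability
  have hw2 : MemLp w 2 μ := by
    rw [memLp_two_iff_integrable_sq hw_meas.aestronglyMeasurable]
    have h24 : (-1:ℝ) < 2*α - 4 := by linarith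
    have hint : IntegrableOn (fun t : ℝ => t ^ (2*α - 4)) (Set.Ioo 0 1) := by
      have := (intervalIntegral.intervalIntegrable_rpow' h24 (a := 0) (b := 1))
      rw [intervalIntegrable_iff_integrableOn_Ioc_of_le (by norm_num)] at this
      exact this.mono_set Set.Ioo_subset_Ioc_self
    apply hint.congr
    filter_upwards [ae_restrict_mem measurableSet_Ioo] with t ht
    have ht0 : (0:ℝ) < t := ht.1
    rw [hw]
    simp only
    rw [← Real.rpow_natCast (t ^ (α-2)) 2, ← Real.rpow_mul ht0.le]
    ring_nf
  have hNw : eLpNorm w 2 μ ≠ ⊤ := hw2.eLpNorm_ne_top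
  refine ⟨1 + (Real.Gamma α / Real.Gamma (α-1)) * (eLpNorm w 2 μ).toReal, by positivity, ?_⟩
  intro ψ hψ
  set C := Real.Gamma α * rightFracInt (α - 1) ψ 0 with hC
  have hPV : PV α ψ = ψ - (fun _ => C) := rfl
  have step1 : eLpNorm (PV α ψ) 2 μ ≤ eLpNorm ψ 2 μ + eLpNorm (fun _ : ℝ => C) 2 μ := by
    rw [hPV]
    exact eLpNorm_sub_le hψ.1 aestronglyMeasurable_const (by norm_num)
  have step2 : eLpNorm (fun _ : ℝ => C) 2 μ = ENNReal.ofReal |C| := by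
    rw [eLpNorm_const C (by norm_num) hμne, hμuniv]
    simp [Real.enorm_eq_ofReal_abs]
  -- Hölder bound on |C|
  have holder : ENNReal.ofReal |∫ t : ℝ, w t * ψ t ∂μ| ≤ eLpNorm w 2 μ * eLpNorm ψ 2 μ := by
    calc ENNReal.ofReal |∫ t : ℝ, w t * ψ t ∂μ|
        = (‖∫ t : ℝ, w t * ψ t ∂μ‖₊ : ℝ≥0∞) := (Real.enorm_eq_ofReal_abs _).symm
      _ ≤ ∫⁻ t, ‖w t * ψ t‖₊ ∂μ := enorm_integral_le_lintegral_enorm _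
      _ = ∫⁻ t, ((fun t => (‖w t‖₊ : ℝ≥0∞)) * fun t => (‖ψ t‖₊ : ℝ≥0∞)) t ∂μ := by
          simp [nnnorm_mul, ENNReal.coe_mul]
      _ ≤ (∫⁻ t, (‖w t‖₊ : ℝ≥0∞) ^ (2:ℝ) ∂μ) ^ (1/(2:ℝ)) *
          (∫⁻ t, (‖ψ t‖₊ : ℝ≥0∞) ^ (2:ℝ) ∂μ) ^ (1/(2:ℝ)) := by
          refine ENNReal.lintegral_mul_le_Lp_mul_Lq μ Real.HolderConjugate.two_two ?_ ?_
          · exact hw_meas.nnnorm.coe_nnreal_ennreal.aemeasurable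
          · exact hψ.1.enorm
      _ = eLpNorm w 2 μ * eLpNorm ψ 2 μ := by
          rw [eLpNorm_eq_lintegral_rpow_enorm_toReal (by norm_num) (by norm_num),
              eLpNorm_eq_lintegral_rpow_enorm_toReal (by norm_num) (by norm_num)]
          norm_num
          rfl
  have hCval : |C| = (Real.Gamma α / Real.Gamma (α-1)) * |∫ t : ℝ, w t * ψ t ∂μ| := by
    have : rightFracInt (α - 1) ψ 0 = (1 / Real.Gamma (α-1)) * ∫ t : ℝ, w t * ψ t ∂μ := by
      rw [rightFracInt]
      congr 1
      rw [intervalIntegral.integral_of_le (by norm_num : (0:ℝ) ≤ 1), hμ,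
        ← integral_Ioc_eq_integral_Ioo]
      apply setIntegral_congr_fun measurableSet_Ioc
      intro t _
      simp [hw, sub_zero, show α - 1 - 1 = α - 2 by ring]
    rw [hC, this, abs_mul, abs_mul]
    rw [abs_of_pos hΓα, abs_of_pos (by positivity : (0:ℝ) < 1 / Real.Gamma (α-1))]
    ring
  have step3 : ENNReal.ofReal |C|
      ≤ ENNReal.ofReal ((Real.Gamma α / Real.Gamma (α-1)) * (eLpNorm w 2 μ).toReal)
        * eLpNorm ψ 2 μ := by
    rw [hCval, ENNReal.ofReal_mul (by positivity), ENNReal.ofReal_mul (by positivity)]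
    rw [ENNReal.ofReal_toReal hNw, mul_assoc]
    exact mul_le_mul_right holder _
  calc eLpNorm (PV α ψ) 2 μ ≤ eLpNorm ψ 2 μ + eLpNorm (fun _ : ℝ => C) 2 μ := step1
    _ ≤ eLpNorm ψ 2 μ + ENNReal.ofReal ((Real.Gamma α / Real.Gamma (α-1)) * (eLpNorm w 2 μ).toReal) * eLpNorm ψ 2 μ := by
        rw [step2]; exact add_le_add_right step3 _
    _ = ENNReal.ofReal (1 + (Real.Gamma α / Real.Gamma (α-1)) * (eLpNorm w 2 μ).toReal) * eLpNorm ψ 2 μ := by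
        rw [ENNReal.ofReal_add (by norm_num) (by positivity), ENNReal.ofReal_one, add_mul, one_mul]

lemma part2 {α : ℝ} (hα : α ∈ Set.Ioo (3/2 : ℝ) 2) :
    ∀ ψ g : ℝ → ℝ,
      MemLp g 2 (volume.restrict (Set.Ioo (0:ℝ) 1)) →
      (∀ x ∈ Set.Icc (0:ℝ) 1, ψ x = ∫ t in (0:ℝ)..x, g t) →
      ψ 0 = 0 → ψ 1 = 0 →
      ∀ x, PV α (fun y => - deriv (rightFracInt (2 - α) ψ) y) x
            = - deriv (rightFracInt (2 - α) ψ) x := by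
  obtain ⟨hα1, hα2⟩ := hα
  have h1α : (-1:ℝ) < 1 - α := by linarith
  have hα2m : (-1:ℝ) < α - 2 := by linarith
  have h2α0 : (0:ℝ) < 2 - α := by linarith
  intro ψ g hgmem hψdef hψ0 hψ1
  set F := rightFracInt (2 - α) ψ with hFdef
  set μ₀ := volume.restrict (Set.Ioo (0:ℝ) 1) with hμ₀
  haveI : IsFiniteMeasure μ₀ := by
    constructor
    rw [hμ₀, Measure.restrict_apply_univ, Real.volume_Ioo]
    norm_num
  have hgi : Integrable g μ₀ := hgmem.integrable (by norm_num)
  set g' : ℝ → ℝ := (hgmem.1.mk g) with hg'def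
  have hg'sm : StronglyMeasurable g' := hgmem.1.stronglyMeasurable_mk
  have hg'm : Measurable g' := hg'sm.measurable
  have hgg' : g =ᵐ[μ₀] g' := hgmem.1.ae_eq_mk
  have hg'i : Integrable g' μ₀ := hgi.congr hgg'
  have hg'iOn : ∀ u : ℝ, 0 ≤ u → IntegrableOn g' (Ioo u 1) volume := by
    intro u hu
    exact (show IntegrableOn g' (Ioo 0 1) volume from hg'i).mono_set (Ioo_subset_Ioo hu le_rfl)
  have hcongr_sub : ∀ u : ℝ, 0 ≤ u →
      (∫ s in Ioo u 1, g s) = ∫ s in Ioo u 1, g' s := by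
    intro u hu
    apply MeasureTheory.integral_congr_ae
    exact ae_restrict_of_ae_restrict_of_subset (Ioo_subset_Ioo hu le_rfl) hgg'
  have hgIoc : IntegrableOn g (Ioc 0 1) volume := by
    have h1 : IntegrableOn g (Ioo 0 1) volume := hgi
    exact h1.congr_set_ae (MeasureTheory.Ioo_ae_eq_Ioc).symm
  have hgII : ∀ u v : ℝ, 0 ≤ u → v ≤ 1 → u ≤ v → IntervalIntegrable g volume u v := by
    intro u v hu hv huv
    rw [intervalIntegrable_iff_integrableOn_Ioc_of_le huv]
    exact hgIoc.mono_set (Ioc_subset_Ioc hu hv)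
  have h01 : (∫ s in (0:ℝ)..(1:ℝ), g s) = 0 := by
    rw [← hψdef 1 (by norm_num : (1:ℝ) ∈ Icc (0:ℝ) 1)]
    exact hψ1
  have hg01 : (∫ s in Ioo (0:ℝ) 1, g' s) = 0 := by
    rw [← hcongr_sub 0 le_rfl, ← integral_Ioc_eq_integral_Ioo,
      ← intervalIntegral.integral_of_le (zero_le_one)]
    exact h01
  have hψ_eq : ∀ t ∈ Icc (0:ℝ) 1, ψ t = -∫ s in Ioo t 1, g' s := by
    intro t ht
    have hadd : (∫ s in (0:ℝ)..t, g s) + (∫ s in t..(1:ℝ), g s) = ∫ s in (0:ℝ)..(1:ℝ), g s :=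
      intervalIntegral.integral_add_adjacent_intervals (hgII 0 t le_rfl ht.2 ht.1)
        (hgII t 1 ht.1 le_rfl ht.2)
    have h2 : (∫ s in t..(1:ℝ), g s) = ∫ s in Ioo t 1, g' s := by
      rw [intervalIntegral.integral_of_le ht.2, integral_Ioc_eq_integral_Ioo]
      exact hcongr_sub t ht.1
    rw [hψdef t ht]
    rw [h01, h2] at hadd
    linarith
  set K : ℝ → ℝ := fun t => ∫ s in Ioo t 1, (s - t) ^ (1-α) * g' s with hKdef
  -- swap lemma instance B (kernel (s-t)^(1-α)), for any base point x ∈ [0,1)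
  have swapB : ∀ x : ℝ, 0 ≤ x →
      IntegrableOn K (Ioo x 1) volume ∧
      (∫ t in Ioo x 1, K t)
        = ∫ s in Ioo x 1, ((s - x) ^ (2-α) / (2-α)) * g' s := by
    intro x hx0
    obtain ⟨hint, heq⟩ := swap_triangle hx0 (fun t s => (s - t) ^ (1-α)) g'
      ((meas_rpow (1-α)).comp (measurable_snd.sub measurable_fst)) hg'm (hg'iOn x hx0)
      (fun t s ht hts => Real.rpow_nonneg (by linarith) _)
      (fun s hs => IOn_sub_left h1α hs.1.le)
      (1/(2-α))
      (by
        intro s hs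
        rw [int_Ioo_sub_left h1α hs.1.le, show (1:ℝ) - α + 1 = 2 - α by ring]
        have h1 : (s - x) ^ (2-α) ≤ 1 :=
          Real.rpow_le_one (by linarith [hs.1]) (by linarith [hs.2]) h2α0.le
        exact div_le_div_of_nonneg_right h1 h2α0.le)
    constructor
    · exact hint
    · have heq2 : (∫ s in Ioo x 1, (∫ t in Ioo x s, (s - t) ^ (1-α)) * g' s)
          = ∫ s in Ioo x 1, ((s - x) ^ (2-α) / (2-α)) * g' s := by
        apply setIntegral_congr_fun measurableSet_Ioo
        intro s hs
        show (∫ t in Ioo x s, (s - t) ^ (1-α)) * g' s = ((s - x) ^ (2-α) / (2-α)) * g' s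
        rw [int_Ioo_sub_left h1α hs.1.le, show (1:ℝ) - α + 1 = 2 - α by ring]
      calc (∫ t in Ioo x 1, K t)
          = ∫ t in Ioo x 1, ∫ s in Ioo t 1, (s - t) ^ (1-α) * g' s := by rw [hKdef]
        _ = _ := heq.trans heq2
  -- swap lemma instance A (kernel (t-x)^(1-α)), for x ∈ (0,1)
  have swapA : ∀ x ∈ Ioo (0:ℝ) 1,
      (∫ t in Ioo x 1, (t - x) ^ (1-α) * ψ t)
        = -∫ s in Ioo x 1, ((s - x) ^ (2-α) / (2-α)) * g' s := by
    intro x hx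
    obtain ⟨-, heq⟩ := swap_triangle hx.1.le (fun t s => (t - x) ^ (1-α)) g'
      ((meas_rpow (1-α)).comp (measurable_fst.sub measurable_const)) hg'm (hg'iOn x hx.1.le)
      (fun t s ht hts => Real.rpow_nonneg (by linarith) _)
      (fun s hs => IOn_sub_right h1α hs.1.le)
      (1/(2-α))
      (by
        intro s hs
        rw [int_Ioo_sub_right h1α hs.1.le, show (1:ℝ) - α + 1 = 2 - α by ring]
        have h1 : (s - x) ^ (2-α) ≤ 1 :=
          Real.rpow_le_one (by linarith [hs.1]) (by linarith [hs.2, hx.1]) h2α0.le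
        exact div_le_div_of_nonneg_right h1 h2α0.le)
    have heq2 : (∫ s in Ioo x 1, (∫ t in Ioo x s, (t - x) ^ (1-α)) * g' s)
        = ∫ s in Ioo x 1, ((s - x) ^ (2-α) / (2-α)) * g' s := by
      apply setIntegral_congr_fun measurableSet_Ioo
      intro s hs
      show (∫ t in Ioo x s, (t - x) ^ (1-α)) * g' s = ((s - x) ^ (2-α) / (2-α)) * g' s
      rw [int_Ioo_sub_right h1α hs.1.le, show (1:ℝ) - α + 1 = 2 - α by ring]
    have hL : (∫ t in Ioo x 1, (t - x) ^ (1-α) * ψ t)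
        = -∫ t in Ioo x 1, ∫ s in Ioo t 1, (t - x) ^ (1-α) * g' s := by
      rw [← MeasureTheory.integral_neg]
      apply setIntegral_congr_fun measurableSet_Ioo
      intro t ht
      show (t - x) ^ (1-α) * ψ t = -∫ s in Ioo t 1, (t - x) ^ (1-α) * g' s
      rw [MeasureTheory.integral_const_mul,
        hψ_eq t ⟨le_trans hx.1.le ht.1.le, ht.2.le⟩]
      ring
    rw [hL, heq, heq2]
  -- F in terms of K
  have hFK : ∀ x ∈ Ioo (0:ℝ) 1, F x = -(1/Real.Gamma (2-α)) * ∫ t in Ioo x 1, K t := by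
    intro x hx
    rw [hFdef]
    rw [show rightFracInt (2-α) ψ x
        = (1 / Real.Gamma (2-α)) * ∫ t in x..(1:ℝ), (t - x) ^ (2-α-1) * ψ t from rfl]
    rw [intervalIntegral.integral_of_le hx.2.le, integral_Ioc_eq_integral_Ioo]
    rw [show (2:ℝ) - α - 1 = 1 - α by ring]
    rw [swapA x hx, (swapB x hx.1.le).2]
    ring
  -- K' and J
  have hKint : IntegrableOn K (Ioo 0 1) volume := (swapB 0 le_rfl).1
  set K' : ℝ → ℝ := (Ioo (0:ℝ) 1).indicator K with hK'def
  have hK' : Integrable K' volume := by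
    rw [hK'def, integrable_indicator_iff measurableSet_Ioo]
    exact hKint
  set J : ℝ → ℝ := fun y => ∫ t in y..(1:ℝ), K' t with hJdef
  have hJK : ∀ y ∈ Ioo (0:ℝ) 1, (∫ t in Ioo y 1, K t) = J y := by
    intro y hy
    rw [hJdef]
    show (∫ t in Ioo y 1, K t) = ∫ t in y..(1:ℝ), K' t
    rw [intervalIntegral.integral_of_le hy.2.le, integral_Ioc_eq_integral_Ioo]
    apply setIntegral_congr_fun measurableSet_Ioo
    intro t ht
    rw [hK'def, indicator_of_mem (show t ∈ Ioo (0:ℝ) 1 from ⟨lt_trans hy.1 ht.1, ht.2⟩)]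
  have hFJ : ∀ y ∈ Ioo (0:ℝ) 1, F y = -(1/Real.Gamma (2-α)) * J y := by
    intro y hy
    rw [← hJK y hy]
    exact hFK y hy
  have hDa : ∀ᵐ t : ℝ, HasDerivAt J (-K' t) t := ae_hasDerivAt_int K' hK'
  have hφae : ∀ᵐ t ∂μ₀, deriv F t = (1/Real.Gamma (2-α)) * K t := by
    rw [hμ₀]
    filter_upwards [ae_restrict_mem measurableSet_Ioo,
      hDa.filter_mono (ae_mono Measure.restrict_le_self)] with t ht hD
    have hev : F =ᶠ[nhds t] (fun y => -(1/Real.Gamma (2-α)) * J y) := by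
      filter_upwards [isOpen_Ioo.mem_nhds ht] with y hy
      exact hFJ y hy
    rw [hev.deriv_eq, (hD.const_mul (-(1/Real.Gamma (2-α)))).deriv,
      hK'def, indicator_of_mem ht]
    ring
  -- Fubini 3
  set B : ℝ := ∫ u in Ioo (0:ℝ) 1, u ^ (α-2) * (1-u) ^ (1-α) with hBdef
  have hswap3 : (∫ t in Ioo (0:ℝ) 1, t ^ (α-2) * K t) = 0 := by
    obtain ⟨-, heq⟩ := swap_triangle le_rfl (fun t s => t ^ (α-2) * (s - t) ^ (1-α)) g'
      (((meas_rpow (α-2)).comp measurable_fst).mul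
        ((meas_rpow (1-α)).comp (measurable_snd.sub measurable_fst))) hg'm (hg'iOn 0 le_rfl)
      (fun t s ht hts => mul_nonneg (Real.rpow_nonneg ht.le _) (Real.rpow_nonneg (by linarith) _))
      (fun s hs => twoKernel_int hα2m h1α hs.1)
      B
      (by
        intro s hs
        rw [twoKernel_val (α-2) (1-α) hs.1, show α - 2 + (1-α) + 1 = 0 by ring,
          Real.rpow_zero, one_mul, hBdef])
    have hLHS : (∫ t in Ioo (0:ℝ) 1, ∫ s in Ioo t 1, (t ^ (α-2) * (s - t) ^ (1-α)) * g' s)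
        = ∫ t in Ioo (0:ℝ) 1, t ^ (α-2) * K t := by
      apply setIntegral_congr_fun measurableSet_Ioo
      intro t ht
      show (∫ s in Ioo t 1, (t ^ (α-2) * (s - t) ^ (1-α)) * g' s) = t ^ (α-2) * K t
      rw [hKdef]
      show _ = t ^ (α-2) * ∫ s in Ioo t 1, (s - t) ^ (1-α) * g' s
      rw [← MeasureTheory.integral_const_mul]
      apply setIntegral_congr_fun measurableSet_Ioo
      intro s hs
      show (t ^ (α-2) * (s - t) ^ (1-α)) * g' s = t ^ (α-2) * ((s - t) ^ (1-α) * g' s)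
      ring
    have hRHS : (∫ s in Ioo (0:ℝ) 1, (∫ t in Ioo 0 s, t ^ (α-2) * (s - t) ^ (1-α)) * g' s)
        = 0 := by
      rw [show (∫ s in Ioo (0:ℝ) 1, (∫ t in Ioo 0 s, t ^ (α-2) * (s - t) ^ (1-α)) * g' s)
          = ∫ s in Ioo (0:ℝ) 1, B * g' s from ?_]
      · rw [MeasureTheory.integral_const_mul, hg01, mul_zero]
      · apply setIntegral_congr_fun measurableSet_Ioo
        intro s hs
        show (∫ t in Ioo 0 s, t ^ (α-2) * (s - t) ^ (1-α)) * g' s = B * g' s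
        rw [twoKernel_val (α-2) (1-α) hs.1, show α - 2 + (1-α) + 1 = 0 by ring,
          Real.rpow_zero, one_mul, hBdef]
    rw [← hLHS, heq, hRHS]
  -- conclusion
  intro x
  have hR : rightFracInt (α - 1) (fun y => -deriv F y) 0 = 0 := by
    rw [show rightFracInt (α - 1) (fun y => -deriv F y) 0
        = (1 / Real.Gamma (α-1)) * ∫ t in (0:ℝ)..1, (t - 0) ^ (α-1-1) * (-deriv F t) from rfl]
    have hI0 : (∫ t in (0:ℝ)..1, (t - 0) ^ (α-1-1) * (-deriv F t)) = 0 := by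
      rw [intervalIntegral.integral_of_le zero_le_one, integral_Ioc_eq_integral_Ioo]
      calc (∫ t in Ioo (0:ℝ) 1, (t - 0) ^ (α-1-1) * (-deriv F t))
          = ∫ t in Ioo (0:ℝ) 1, -(1/Real.Gamma (2-α)) * (t ^ (α-2) * K t) := by
            apply MeasureTheory.integral_congr_ae
            filter_upwards [hφae] with t hd
            rw [sub_zero, show α - 1 - 1 = α - 2 by ring, hd]
            ring
        _ = -(1/Real.Gamma (2-α)) * ∫ t in Ioo (0:ℝ) 1, t ^ (α-2) * K t :=
            MeasureTheory.integral_const_mul _ _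
        _ = 0 := by rw [hswap3, mul_zero]
    rw [hI0, mul_zero]
  show PV α (fun y => -deriv F y) x = -deriv F x
  rw [show PV α (fun y => -deriv F y) x
      = (fun y => -deriv F y) x - Real.Gamma α * rightFracInt (α - 1) (fun y => -deriv F y) 0
      from rfl, hR, mul_zero, sub_zero]



end Aux

/-- For `α ∈ (3/2,2)`: `P_V` is bounded on `L²(0,1)`, and for absolutely continuous
`ψ` with `ψ(0) = ψ(1) = 0` and `ψ' ∈ L²`, the function `φ = ᴿD₁^{α-1} ψ` satisfies
`P_V φ = φ`. -/
theorem PV_bounded_and_fixes (α : ℝ) (hα : α ∈ Set.Ioo (3/2 : ℝ) 2) :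
    (∃ c : ℝ, 0 < c ∧ ∀ ψ : ℝ → ℝ,
      MemLp ψ 2 (volume.restrict (Set.Ioo (0:ℝ) 1)) →
      eLpNorm (PV α ψ) 2 (volume.restrict (Set.Ioo (0:ℝ) 1))
        ≤ ENNReal.ofReal c * eLpNorm ψ 2 (volume.restrict (Set.Ioo (0:ℝ) 1))) ∧
    (∀ ψ g : ℝ → ℝ,
      MemLp g 2 (volume.restrict (Set.Ioo (0:ℝ) 1)) →
      (∀ x ∈ Set.Icc (0:ℝ) 1, ψ x = ∫ t in (0:ℝ)..x, g t) →
      ψ 0 = 0 → ψ 1 = 0 →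
      ∀ x, PV α (fun y => - deriv (rightFracInt (2 - α) ψ) y) x
            = - deriv (rightFracInt (2 - α) ψ) x) := by
  exact ⟨part1 hα, part2 hα⟩
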